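/- Let $X \subseteq \mathcal{A}^{\mathbb{Z}^d}$ ($d \geq 2$, $\mathcal{A}$ finite) be a strongly irreducible subshift with strong irreducibility constant $k$, and let $c : X \times \mathbb{Z}^d \to G$ be a continuous cocycle into a finitely generated group $G$. Then there exists a constant $K$ such that: (1) for all $x, y \in X$ and $u \in \mathbb{Z}^d$ there exist $g_1, g_2 \in G$ with $|g_1|, |g_2| < K$ and $c(x, u) = g_1 \, c(y, u) \, g_2$; and (2) for all $x \in X$ and $v, w \in \mathbb{Z}^d$ there exist $g_1, g_2 \in G$ with $|g_1|, |g_2| < K$ and $c(x, v+w) = c(x,v) \, g_1 \, c(x,w) \, g_2$. In particular, $\sup_{x,y \in X, v \in \mathbb{Z}^d} \big| |c(x,v)| - |c(y,v)| \big| < \infty$. -/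

import Mathlib

/-- Word length of `g` with respect to a generating set `S`. -/
noncomputable def wordLength {G : Type*} [Group G] (S : Set G) (g : G) : ℕ :=
  sInf {n : ℕ | ∃ f : Fin n → G, (∀ i, f i ∈ S) ∧ (List.ofFn f).prod = g}

/-- The `ℓ¹` (graph) distance on `ℤ^d`. -/
def dOne {d : ℕ} (v w : Fin d → ℤ) : ℕ :=
  ∑ i, (v i - w i).natAbs

section WL
variable {G : Type*} [Group G] {S₀ : Set G}

lemma wordLength_le_of_list {l : List G} (hl : ∀ a ∈ l, a ∈ S₀) {g : G} (hp : l.prod = g) :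
    wordLength S₀ g ≤ l.length := by
  apply Nat.sInf_le
  exact ⟨l.get, fun i => hl _ (l.get_mem _), by rw [List.ofFn_get]; exact hp⟩

lemma exists_word (hsym : ∀ s ∈ S₀, s⁻¹ ∈ S₀) (hgen : Subgroup.closure S₀ = ⊤) (g : G) :
    ∃ l : List G, (∀ a ∈ l, a ∈ S₀) ∧ l.prod = g ∧ l.length = wordLength S₀ g := by
  have hg : g ∈ Submonoid.closure (S₀ ∪ S₀⁻¹) := by
    rw [← Subgroup.closure_toSubmonoid, hgen]; trivial
  obtain ⟨l, hl, hp⟩ := Submonoid.exists_list_of_mem_closure hg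
  have hl' : ∀ a ∈ l, a ∈ S₀ := by
    intro a ha
    rcases hl a ha with h | h
    · exact h
    · simpa using hsym _ h
  have hne : {n : ℕ | ∃ f : Fin n → G, (∀ i, f i ∈ S₀) ∧ (List.ofFn f).prod = g}.Nonempty :=
    ⟨l.length, l.get, fun i => hl' _ (l.get_mem _), by rw [List.ofFn_get]; exact hp⟩
  obtain ⟨f, hf, hfp⟩ := Nat.sInf_mem hne
  exact ⟨List.ofFn f, by simpa using fun i => hf i, hfp, by simp [wordLength]⟩

lemma wordLength_mul_le (hsym : ∀ s ∈ S₀, s⁻¹ ∈ S₀) (hgen : Subgroup.closure S₀ = ⊤) (g h : G) :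
    wordLength S₀ (g * h) ≤ wordLength S₀ g + wordLength S₀ h := by
  obtain ⟨l, hl, hp, hn⟩ := exists_word hsym hgen g
  obtain ⟨l', hl', hp', hn'⟩ := exists_word hsym hgen h
  calc wordLength S₀ (g * h) ≤ (l ++ l').length := by
        refine wordLength_le_of_list ?_ ?_
        · intro a ha; rcases List.mem_append.1 ha with h | h
          exacts [hl _ h, hl' _ h]
        · rw [List.prod_append, hp, hp']
    _ = _ := by rw [List.length_append, hn, hn']

lemma wordLength_inv_le (hsym : ∀ s ∈ S₀, s⁻¹ ∈ S₀) (hgen : Subgroup.closure S₀ = ⊤) (g : G) :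
    wordLength S₀ g⁻¹ ≤ wordLength S₀ g := by
  obtain ⟨l, hl, hp, hn⟩ := exists_word hsym hgen g
  calc wordLength S₀ g⁻¹ ≤ ((l.map fun x => x⁻¹).reverse).length := by
        refine wordLength_le_of_list ?_ ?_
        · intro a ha
          simp only [List.mem_reverse, List.mem_map] at ha
          obtain ⟨b, hb, rfl⟩ := ha; exact hsym _ (hl _ hb)
        · rw [← List.prod_inv_reverse, hp]
    _ = _ := by simp [hn]

lemma wordLength_one_le : wordLength S₀ (1 : G) = 0 :=
  Nat.le_antisymm (wordLength_le_of_list (l := []) (by simp) (by simp)) (Nat.zero_le _)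

end WL

def psums {V : Type*} [AddCommGroup V] : List V → List V
  | [] => []
  | a :: l => 0 :: (psums l).map (a + ·)

def unitv (d : ℕ) (i : Fin d) (ζ : Bool) : Fin d → ℤ :=
  fun j => if j = i then (if ζ then 1 else -1) else 0

def Lpath (d : ℕ) (u : Fin d → ℤ) : List (Fin d → ℤ) :=
  (List.finRange d).flatMap fun i => List.replicate (u i).natAbs (unitv d i (decide (0 ≤ u i)))

lemma sum_replicate_unitv (d : ℕ) (i : Fin d) (t : ℤ) :
    (List.replicate t.natAbs (unitv d i (decide (0 ≤ t)))).sum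
      = fun j => if j = i then t else 0 := by
  rw [List.sum_replicate]
  funext j
  rw [Pi.smul_apply, unitv]
  by_cases h : j = i
  · rw [if_pos h, if_pos h]
    by_cases ht : 0 ≤ t
    · rw [if_pos (by simpa using ht), nsmul_eq_mul]; omega
    · rw [if_neg (by simpa using ht), nsmul_eq_mul]; omega
  · rw [if_neg h, if_neg h, smul_zero]

lemma eval_sum {d : ℕ} (l : List (Fin d → ℤ)) (j : Fin d) :
    l.sum j = (l.map (fun p => p j)).sum := by
  induction l with
  | nil => simp
  | cons a l ih => simp [ih]

lemma sum_Lpath (d : ℕ) (u : Fin d → ℤ) : (Lpath d u).sum = u := by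
  funext j
  rw [Lpath, eval_sum, List.flatMap, List.map_flatten, List.map_map]
  rw [List.sum_flatten, List.map_map]
  have : (List.map (List.sum ∘ (List.map fun p => p j) ∘
        fun i => List.replicate (u i).natAbs (unitv d i (decide (0 ≤ u i))))
        (List.finRange d))
      = (List.finRange d).map (fun i => if j = i then u j else 0) := by
    apply List.map_congr_left
    intro i _
    have := congrFun (sum_replicate_unitv d i (u i)) j
    rw [eval_sum] at this
    simp only [Function.comp_apply, this]
    by_cases h : j = i <;> simp [h]
  rw [this, ← Fin.sum_univ_def]
  simp

lemma length_Lpath (d : ℕ) (u : Fin d → ℤ) : (Lpath d u).length = ∑ i, (u i).natAbs := by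
  rw [Lpath, List.length_flatMap, ← Fin.sum_univ_def]
  simp

def Cone {d : ℕ} (u p : Fin d → ℤ) : Prop :=
  ∀ i, (0 ≤ u i → 0 ≤ p i) ∧ (u i < 0 → p i ≤ 0)

lemma cone_zero {d : ℕ} (u : Fin d → ℤ) : Cone u 0 := by
  intro i; simp

lemma cone_add {d : ℕ} {u p q : Fin d → ℤ} (hp : Cone u p) (hq : Cone u q) :
    Cone u (p + q) := by
  intro i
  have h1 := hp i; have h2 := hq i
  constructor <;> intro h <;> simp only [Pi.add_apply] <;>
    [exact add_nonneg (h1.1 h) (h2.1 h); exact add_nonpos (h1.2 h) (h2.2 h)]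

lemma mem_Lpath {d : ℕ} {u δ : Fin d → ℤ} (h : δ ∈ Lpath d u) :
    (∃ i ζ, δ = unitv d i ζ) ∧ Cone u δ := by
  rw [Lpath, List.mem_flatMap] at h
  obtain ⟨i, -, hmem⟩ := h
  have hδ := (List.eq_of_mem_replicate hmem)
  subst hδ
  refine ⟨⟨i, _, rfl⟩, ?_⟩
  intro j
  by_cases hj : j = i
  · subst hj
    by_cases ht : 0 ≤ u j <;> simp [unitv, ht]
  · simp [unitv, hj]

lemma psums_cone {d : ℕ} {u : Fin d → ℤ} :
    ∀ {l : List (Fin d → ℤ)}, (∀ δ ∈ l, Cone u δ) → ∀ p ∈ psums l, Cone u p := by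
  intro l
  induction l with
  | nil => intro _ p hp; simp [psums] at hp
  | cons a l ih =>
    intro hl p hp
    rw [psums] at hp
    rcases List.mem_cons.1 hp with rfl | hp
    · exact cone_zero u
    · obtain ⟨q, hq, rfl⟩ := List.mem_map.1 hp
      exact cone_add (hl a List.mem_cons_self) (ih (fun δ hδ => hl δ (List.mem_cons_of_mem _ hδ)) q hq)

lemma psums_dichotomy {d : ℕ} {u : Fin d → ℤ} :
    ∀ {l : List (Fin d → ℤ)}, (∀ δ ∈ l, Cone u δ) → ∀ p ∈ psums l, ∀ q ∈ psums l,
      Cone u (q - p) ∨ Cone u (p - q) := by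
  intro l
  induction l with
  | nil => intro _ p hp; simp [psums] at hp
  | cons a l ih =>
    intro hl p hp q hq
    have hl' : ∀ δ ∈ l, Cone u δ := fun δ hδ => hl δ (List.mem_cons_of_mem _ hδ)
    rw [psums] at hp hq
    rcases List.mem_cons.1 hp with rfl | hp
    · rcases List.mem_cons.1 hq with rfl | hq
      · left; simpa using cone_zero u
      · obtain ⟨q', hq', rfl⟩ := List.mem_map.1 hq
        left
        simpa using cone_add (hl a List.mem_cons_self) (psums_cone hl' q' hq')
    · obtain ⟨p', hp', rfl⟩ := List.mem_map.1 hp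
      rcases List.mem_cons.1 hq with rfl | hq
      · right
        simpa using cone_add (hl a List.mem_cons_self) (psums_cone hl' p' hp')
      · obtain ⟨q', hq', rfl⟩ := List.mem_map.1 hq
        have := ih hl' p' hp' q' hq'
        rcases this with h | h
        · left; convert h using 1; funext j; simp [sub_sub_sub_cancel_left]
        · right; convert h using 1; funext j; simp [sub_sub_sub_cancel_left]

lemma exists_window {A : Type*} [TopologicalSpace A] [DiscreteTopology A] {ι : Type*}
    {G : Type*} [TopologicalSpace G] [DiscreteTopology G]
    {X : Set (ι → A)} (hX : IsCompact X) {φ : (ι → A) → G} (hφ : ContinuousOn φ X) :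
    ∃ W : Finset ι, ∀ x ∈ X, ∀ y ∈ X, (∀ n ∈ W, x n = y n) → φ x = φ y := by
  classical
  have hpt : ∀ x (_ : x ∈ X), ∃ I : Finset ι, ∀ y ∈ X, (∀ n ∈ I, y n = x n) → φ y = φ x := by
    intro x hx
    have h1 : φ ⁻¹' {φ x} ∈ nhdsWithin x X :=
      hφ x hx ((isOpen_discrete {φ x}).mem_nhds rfl)
    rw [mem_nhdsWithin] at h1
    obtain ⟨U, hU, hxU, hUX⟩ := h1
    obtain ⟨I, u, hIu, hpi⟩ := isOpen_pi_iff.1 hU x hxU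
    refine ⟨I, fun y hy hagree => ?_⟩
    have hyU : y ∈ U := by
      apply hpi
      rw [Set.mem_pi]
      intro i hi
      rw [hagree i hi]
      exact (hIu i hi).2
    exact hUX ⟨hyU, hy⟩
  choose I hI using hpt
  have hnhds : ∀ x (hx : x ∈ X), {y | ∀ n ∈ I x hx, y n = x n} ∈ nhds x := by
    intro x hx
    apply IsOpen.mem_nhds
    · have : {y : ι → A | ∀ n ∈ I x hx, y n = x n} = Set.pi (I x hx : Set ι) (fun n => {x n}) := by
        ext y; simp [Set.mem_pi]
      rw [this]
      exact isOpen_set_pi (I x hx).finite_toSet (fun a _ => isOpen_discrete _)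
    · intro n _; rfl
  obtain ⟨t, ht⟩ := hX.elim_nhds_subcover'
    (fun x hx => {y | ∀ n ∈ I x hx, y n = x n}) hnhds
  refine ⟨t.biUnion (fun z => I z.1 z.2), ?_⟩
  · 
    intro x hx y hy hagree
    obtain ⟨z, hzt, hz⟩ : ∃ z ∈ t, ∀ n ∈ I z.1 z.2, x n = (z : ι → A) n := by
      have := ht hx
      simp only [Set.mem_iUnion] at this
      obtain ⟨z, hz, hmem⟩ := this
      exact ⟨z, hz, hmem⟩
    have hxz : φ x = φ (z : ι → A) := hI z.1 z.2 x hx hz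
    have hyz : φ y = φ (z : ι → A) := by
      apply hI z.1 z.2 y hy
      intro n hn
      rw [← hagree n (Finset.mem_biUnion.2 ⟨z, hzt, hn⟩)]
      exact hz n hn
    rw [hxz, hyz]

section Path
variable {A : Type*} {d : ℕ} {G : Type*} [Group G]
variable {X : Set ((Fin d → ℤ) → A)} {c : ((Fin d → ℤ) → A) → (Fin d → ℤ) → G}

lemma c_zero (hcoc : ∀ x ∈ X, ∀ v w : Fin d → ℤ,
      c x (v + w) = c x v * c (fun u => x (u + v)) w)
    {x : (Fin d → ℤ) → A} (hx : x ∈ X) : c x 0 = 1 := by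
  have h := hcoc x hx 0 0
  have hxx : (fun u : Fin d → ℤ => x (u + 0)) = x := by funext u; rw [add_zero]
  rw [hxx, add_zero] at h
  exact mul_eq_left.mp h.symm

lemma path_eq
    (hshift : ∀ x ∈ X, ∀ v : Fin d → ℤ, (fun u => x (u + v)) ∈ X)
    (hcoc : ∀ x ∈ X, ∀ v w : Fin d → ℤ,
      c x (v + w) = c x v * c (fun u => x (u + v)) w)
    {W : Finset (Fin d → ℤ)}
    (hW : ∀ x ∈ X, ∀ y ∈ X, (∀ n ∈ W, x n = y n) →
      ∀ (i : Fin d) (ζ : Bool), c x (unitv d i ζ) = c y (unitv d i ζ)) :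
    ∀ l : List (Fin d → ℤ), (∀ δ ∈ l, ∃ i ζ, δ = unitv d i ζ) →
    ∀ x ∈ X, ∀ y ∈ X, (∀ p ∈ psums l, ∀ w ∈ W, x (p + w) = y (p + w)) →
    c x l.sum = c y l.sum := by
  intro l
  induction l with
  | nil =>
    intro _ x hx y hy _
    simp [List.sum_nil, c_zero hcoc hx, c_zero hcoc hy]
  | cons a l ih =>
    intro hunit x hx y hy hagree
    rw [List.sum_cons, hcoc x hx a l.sum, hcoc y hy a l.sum]
    have h0 : ∀ w ∈ W, x w = y w := by
      intro w hw
      have := hagree 0 (by rw [psums]; exact List.mem_cons_self) w hw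
      simpa using this
    obtain ⟨i, ζ, rfl⟩ := hunit a List.mem_cons_self
    rw [hW x hx y hy h0 i ζ]
    congr 1
    apply ih (fun δ hδ => hunit δ (List.mem_cons_of_mem _ hδ)) _ (hshift x hx _) _
      (hshift y hy _)
    intro p hp w hw
    have hmem : (unitv d i ζ) + p ∈ psums (unitv d i ζ :: l) := by
      rw [psums]; exact List.mem_cons_of_mem _ (List.mem_map.2 ⟨p, hp, rfl⟩)
    have h2 := hagree _ hmem w hw
    have harr : unitv d i ζ + p + w = p + w + unitv d i ζ := by abel
    rw [harr] at h2
    exact h2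

lemma path_bound {S₀ : Set G} (hsym : ∀ s ∈ S₀, s⁻¹ ∈ S₀) (hgen : Subgroup.closure S₀ = ⊤)
    (hshift : ∀ x ∈ X, ∀ v : Fin d → ℤ, (fun u => x (u + v)) ∈ X)
    (hcoc : ∀ x ∈ X, ∀ v w : Fin d → ℤ,
      c x (v + w) = c x v * c (fun u => x (u + v)) w)
    {L : ℕ} (hL : ∀ x ∈ X, ∀ (i : Fin d) (ζ : Bool), wordLength S₀ (c x (unitv d i ζ)) ≤ L) :
    ∀ l : List (Fin d → ℤ), (∀ δ ∈ l, ∃ i ζ, δ = unitv d i ζ) →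
    ∀ x ∈ X, wordLength S₀ (c x l.sum) ≤ L * l.length := by
  intro l
  induction l with
  | nil => intro _ x hx; simp [List.sum_nil, c_zero hcoc hx, wordLength_one_le]
  | cons a l ih =>
    intro hunit x hx
    rw [List.sum_cons, hcoc x hx a l.sum]
    calc wordLength S₀ (c x a * c (fun u => x (u + a)) l.sum)
        ≤ wordLength S₀ (c x a) + wordLength S₀ (c (fun u => x (u + a)) l.sum) :=
          wordLength_mul_le hsym hgen _ _
      _ ≤ L + L * l.length := by
          apply add_le_add
          · obtain ⟨i, ζ, rfl⟩ := hunit a List.mem_cons_self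
            exact hL x hx i ζ
          · exact ih (fun δ hδ => hunit δ (List.mem_cons_of_mem _ hδ)) _ (hshift x hx a)
      _ = L * (a :: l).length := by rw [List.length_cons]; ring

end Path

lemma dOne_triangle {d : ℕ} (a b c : Fin d → ℤ) : dOne a c ≤ dOne a b + dOne b c := by
  rw [dOne, dOne, dOne, ← Finset.sum_add_distrib]
  apply Finset.sum_le_sum
  intro i _
  omega

/-- Let `X ⊆ 𝒜^{ℤ^d}` (`d ≥ 2`, `𝒜` finite) be a strongly irreducible
subshift with SI constant `k`, and `c : X × ℤ^d → G` a continuous cocycle into a finitely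
generated group `G` with word length `|·|`. There is a constant `K` such that:
(1) for `x, y ∈ X` and `u ∈ ℤ^d` there are `g₁, g₂` with `|g₁|, |g₂| < K` and
`c x u = g₁ * c y u * g₂`;
(2) for `x ∈ X` and `v, w ∈ ℤ^d` there are `g₁, g₂` with `|g₁|, |g₂| < K` and
`c x (v + w) = c x v * g₁ * c x w * g₂`.
In particular `sup_{x,y,v} ||c x v| - |c y v|| < ∞`. -/
theorem cocycle_comparison_on_SI_subshift {A : Type*} [Fintype A]
    [TopologicalSpace A] [DiscreteTopology A] (d : ℕ) (hd : 2 ≤ d)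
    {G : Type*} [Group G] [TopologicalSpace G] [DiscreteTopology G]
    (S₀ : Set G) (hS₀fin : S₀.Finite) (hS₀sym : ∀ s ∈ S₀, s⁻¹ ∈ S₀)
    (hS₀gen : Subgroup.closure S₀ = ⊤)
    (X : Set ((Fin d → ℤ) → A)) (hclosed : IsClosed X)
    (hshift : ∀ x ∈ X, ∀ v : Fin d → ℤ, (fun u => x (u + v)) ∈ X)
    (k : ℕ)
    (hSI : ∀ F F' : Set (Fin d → ℤ),
      (∀ u ∈ F, ∀ w ∈ F', k < dOne u w) →
      ∀ x ∈ X, ∀ y ∈ X, ∃ z ∈ X, (∀ u ∈ F, z u = x u) ∧ ∀ u ∈ F', z u = y u)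
    (c : ((Fin d → ℤ) → A) → (Fin d → ℤ) → G)
    (hcont : ∀ v : Fin d → ℤ, ContinuousOn (fun x => c x v) X)
    (hcoc : ∀ x ∈ X, ∀ v w : Fin d → ℤ,
      c x (v + w) = c x v * c (fun u => x (u + v)) w) :
    ∃ K : ℕ,
      (∀ x ∈ X, ∀ y ∈ X, ∀ u : Fin d → ℤ, ∃ g₁ g₂ : G,
        wordLength S₀ g₁ < K ∧ wordLength S₀ g₂ < K ∧
        c x u = g₁ * c y u * g₂) ∧
      (∀ x ∈ X, ∀ v w : Fin d → ℤ, ∃ g₁ g₂ : G,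
        wordLength S₀ g₁ < K ∧ wordLength S₀ g₂ < K ∧
        c x (v + w) = c x v * g₁ * c x w * g₂) ∧
      ∃ D : ℕ, ∀ x ∈ X, ∀ y ∈ X, ∀ v : Fin d → ℤ,
        |(wordLength S₀ (c x v) : ℤ) - (wordLength S₀ (c y v) : ℤ)| ≤ D := by
  classical
  have hXc : IsCompact X := hclosed.isCompact
  -- a common finite window for all the unit-step cocycle values
  have hwin : ∀ p : Fin d × Bool, ∃ W : Finset (Fin d → ℤ), ∀ x ∈ X, ∀ y ∈ X,
      (∀ n ∈ W, x n = y n) → c x (unitv d p.1 p.2) = c y (unitv d p.1 p.2) :=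
    fun p => exists_window hXc (hcont _)
  choose Wf hWf using hwin
  set W : Finset (Fin d → ℤ) := Finset.univ.biUnion Wf with hWdef
  have hW : ∀ x ∈ X, ∀ y ∈ X, (∀ n ∈ W, x n = y n) →
      ∀ (i : Fin d) (ζ : Bool), c x (unitv d i ζ) = c y (unitv d i ζ) := by
    intro x hx y hy hag i ζ
    exact hWf (i, ζ) x hx y hy
      (fun n hn => hag n (Finset.mem_biUnion.2 ⟨(i, ζ), Finset.mem_univ _, hn⟩))
  -- a uniform bound on the word length of unit-step cocycle values
  have hLp : ∀ p : Fin d × Bool, ∃ Lp : ℕ, ∀ x ∈ X,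
      wordLength S₀ (c x (unitv d p.1 p.2)) ≤ Lp := by
    intro p
    have himg : ((fun x => c x (unitv d p.1 p.2)) '' X).Finite :=
      (hXc.image_of_continuousOn (hcont _)).finite_of_discrete
    have h2 : ((wordLength S₀) '' ((fun x => c x (unitv d p.1 p.2)) '' X)).Finite :=
      himg.image _
    obtain ⟨Lp, hub⟩ := h2.bddAbove
    exact ⟨Lp, fun x hx => hub (Set.mem_image_of_mem _ (Set.mem_image_of_mem _ hx))⟩
  choose Lf hLf using hLp
  set L : ℕ := Finset.univ.sup Lf with hLdef
  have hL : ∀ x ∈ X, ∀ (i : Fin d) (ζ : Bool), wordLength S₀ (c x (unitv d i ζ)) ≤ L :=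
    fun x hx i ζ => le_trans (hLf (i, ζ) x hx) (Finset.le_sup (Finset.mem_univ _))
  set r : ℕ := W.sup (fun w => dOne w 0) with hrdef
  set m : ℕ := k + 2 * r + 1 with hmdef
  set K : ℕ := 2 * (L * (2 * m)) + 1 with hKdef
  have key : ∀ x ∈ X, ∀ y ∈ X, ∀ u : Fin d → ℤ, ∃ g₁ g₂ : G,
      wordLength S₀ g₁ < K ∧ wordLength S₀ g₂ < K ∧ c x u = g₁ * c y u * g₂ := by
    intro x hx y hy u
    set i0 : Fin d := ⟨0, by omega⟩ with hi0
    set i1 : Fin d := ⟨1, by omega⟩ with hi1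
    have hne : i0 ≠ i1 := by simp [hi0, hi1, Fin.ext_iff]
    set b : Fin d → ℤ := fun j =>
      if j = i0 then (if 0 ≤ u i0 then (m : ℤ) else -(m : ℤ))
      else if j = i1 then (if 0 ≤ u i1 then -(m : ℤ) else (m : ℤ)) else 0 with hbdef
    have hb0 : b i0 = if 0 ≤ u i0 then (m : ℤ) else -(m : ℤ) := by simp [hbdef]
    have hb1 : b i1 = if 0 ≤ u i1 then -(m : ℤ) else (m : ℤ) := by
      simp [hbdef, hne.symm]
    have hbother : ∀ j, j ≠ i0 → j ≠ i1 → b j = 0 := by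
      intro j h0 h1; simp [hbdef, h0, h1]
    -- separation of the path from its translate
    have hsep0 : ∀ p ∈ psums (Lpath d u), ∀ q ∈ psums (Lpath d u), m ≤ dOne p (q + b) := by
      intro p hp q hq
      have hcone := psums_dichotomy (fun δ hδ => (mem_Lpath hδ).2) p hp q hq
      have hterm : (p i0 - (q i0 + b i0)).natAbs + (p i1 - (q i1 + b i1)).natAbs
          ≤ dOne p (q + b) := by
        have hss : ({i0, i1} : Finset (Fin d)).sum (fun i => (p i - (q + b) i).natAbs)
            ≤ dOne p (q + b) :=
          Finset.sum_le_sum_of_subset (Finset.subset_univ _)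
        rw [Finset.sum_pair hne] at hss
        simpa using hss
      rcases hcone with h | h
      · -- q - p is in the cone: use coordinate i0
        have h0 := h i0
        simp only [Pi.sub_apply] at h0
        have : m ≤ (p i0 - (q i0 + b i0)).natAbs := by
          rcases le_or_gt 0 (u i0) with h00 | h00
          · rw [hb0, if_pos h00]
            have := h0.1 h00
            omega
          · rw [hb0, if_neg (not_le.2 h00)]
            have := h0.2 h00
            omega
        omega
      · -- p - q is in the cone: use coordinate i1
        have h1 := h i1
        simp only [Pi.sub_apply] at h1
        have : m ≤ (p i1 - (q i1 + b i1)).natAbs := by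
          rcases le_or_gt 0 (u i1) with h11 | h11
          · rw [hb1, if_pos h11]
            have := h1.1 h11
            omega
          · rw [hb1, if_neg (not_le.2 h11)]
            have := h1.2 h11
            omega
        omega
    set F : Set (Fin d → ℤ) :=
      {n | ∃ p ∈ psums (Lpath d u), ∃ w ∈ W, n = p + w} with hFdef
    set F' : Set (Fin d → ℤ) :=
      {n | ∃ p ∈ psums (Lpath d u), ∃ w ∈ W, n = p + b + w} with hF'def
    have hsepFF : ∀ n ∈ F, ∀ n' ∈ F', k < dOne n n' := by
      rintro n ⟨p, hp, w, hw, rfl⟩ n' ⟨q, hq, w', hw', rfl⟩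
      have h1 : dOne p (q + b) ≤ dOne p (p + w) + dOne (p + w) (q + b) :=
        dOne_triangle _ _ _
      have h2 : dOne (p + w) (q + b) ≤ dOne (p + w) (q + b + w') + dOne (q + b + w') (q + b) :=
        dOne_triangle _ _ _
      have h3 : dOne p (p + w) = dOne w 0 := by
        rw [dOne, dOne]; apply Finset.sum_congr rfl; intro i _
        simp only [Pi.add_apply, Pi.zero_apply]; omega
      have h4 : dOne (q + b + w') (q + b) = dOne w' 0 := by
        rw [dOne, dOne]; apply Finset.sum_congr rfl; intro i _
        simp only [Pi.add_apply, Pi.zero_apply]; omega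
      have h5 : dOne w 0 ≤ r := Finset.le_sup (f := fun w => dOne w 0) hw
      have h6 : dOne w' 0 ≤ r := Finset.le_sup (f := fun w => dOne w 0) hw'
      have h7 := hsep0 p hp q hq
      omega
    obtain ⟨z, hz, hzx, hzy⟩ := hSI F F' hsepFF x hx y hy
    -- c z u = c x u
    have hz_x : c z u = c x u := by
      have := path_eq hshift hcoc hW (Lpath d u) (fun δ hδ => (mem_Lpath hδ).1)
        z hz x hx ?_
      · rwa [sum_Lpath] at this
      · intro p hp w hw
        exact hzx (p + w) ⟨p, hp, w, hw, rfl⟩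
    -- c (σ^b z) u = c (σ^b y) u
    have hzb_yb : c (fun n => z (n + b)) u = c (fun n => y (n + b)) u := by
      have := path_eq hshift hcoc hW (Lpath d u) (fun δ hδ => (mem_Lpath hδ).1)
        (fun n => z (n + b)) (hshift z hz b) (fun n => y (n + b)) (hshift y hy b) ?_
      · rwa [sum_Lpath] at this
      · intro p hp w hw
        show z (p + w + b) = y (p + w + b)
        have hmem : p + w + b ∈ F' := ⟨p, hp, w, hw, by abel⟩
        exact hzy _ hmem
    -- the cocycle shift relations
    have e1 := hcoc z hz b u
    have e2 := hcoc z hz u b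
    have e3 := hcoc y hy b u
    have e4 := hcoc y hy u b
    rw [add_comm b u] at e1 e3
    refine ⟨c z b * (c y b)⁻¹, c (fun n => y (n + u)) b * (c (fun n => z (n + u)) b)⁻¹,
      ?_, ?_, ?_⟩
    · -- word length bound for g₁
      have hsumb : ∑ i, (b i).natAbs = 2 * m := by
        rw [← Finset.sum_subset (Finset.subset_univ ({i0, i1} : Finset (Fin d)))
          (fun i _ hi => by
            simp only [Finset.mem_insert, Finset.mem_singleton] at hi
            push_neg at hi
            rw [hbother i hi.1 hi.2, Int.natAbs_zero])]
        rw [Finset.sum_pair hne]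
        have hB0 : (b i0).natAbs = m := by rw [hb0]; split <;> simp
        have hB1 : (b i1).natAbs = m := by rw [hb1]; split <;> simp
        omega
      have hwl : ∀ x' ∈ X, wordLength S₀ (c x' b) ≤ L * (2 * m) := by
        intro x' hx'
        have := path_bound hS₀sym hS₀gen hshift hcoc hL (Lpath d b)
          (fun δ hδ => (mem_Lpath hδ).1) x' hx'
        rwa [sum_Lpath, length_Lpath, hsumb] at this
      have hA := hwl z hz
      have hB := le_trans (wordLength_inv_le hS₀sym hS₀gen (c y b)) (hwl y hy)
      have := le_trans (wordLength_mul_le hS₀sym hS₀gen (c z b) (c y b)⁻¹)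
        (add_le_add hA hB)
      omega
    · -- word length bound for g₂
      have hsumb : ∑ i, (b i).natAbs = 2 * m := by
        rw [← Finset.sum_subset (Finset.subset_univ ({i0, i1} : Finset (Fin d)))
          (fun i _ hi => by
            simp only [Finset.mem_insert, Finset.mem_singleton] at hi
            push_neg at hi
            rw [hbother i hi.1 hi.2, Int.natAbs_zero])]
        rw [Finset.sum_pair hne]
        have hB0 : (b i0).natAbs = m := by rw [hb0]; split <;> simp
        have hB1 : (b i1).natAbs = m := by rw [hb1]; split <;> simp
        omega
      have hwl : ∀ x' ∈ X, wordLength S₀ (c x' b) ≤ L * (2 * m) := by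
        intro x' hx'
        have := path_bound hS₀sym hS₀gen hshift hcoc hL (Lpath d b)
          (fun δ hδ => (mem_Lpath hδ).1) x' hx'
        rwa [sum_Lpath, length_Lpath, hsumb] at this
      have hA := hwl _ (hshift y hy u)
      have hB := le_trans (wordLength_inv_le hS₀sym hS₀gen (c (fun n => z (n + u)) b))
        (hwl _ (hshift z hz u))
      have := le_trans
        (wordLength_mul_le hS₀sym hS₀gen (c (fun n => y (n + u)) b)
          (c (fun n => z (n + u)) b)⁻¹)
        (add_le_add hA hB)
      omega
    · -- the identity
      rw [← hz_x]
      have h12 : c z b * c (fun n => z (n + b)) u = c z u * c (fun n => z (n + u)) b :=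
        e1.symm.trans e2
      have h34 : c y b * c (fun n => y (n + b)) u = c y u * c (fun n => y (n + u)) b :=
        e3.symm.trans e4
      have hzu : c z u = c z b * c (fun n => z (n + b)) u * (c (fun n => z (n + u)) b)⁻¹ := by
        rw [h12]; group
      have hyu : c (fun n => y (n + b)) u
          = (c y b)⁻¹ * (c y u * c (fun n => y (n + u)) b) := by
        rw [← h34]; group
      rw [hzu, hzb_yb, hyu]
      group
  refine ⟨K, key, ?_, ?_⟩
  · intro x hx v w
    obtain ⟨g₁, g₂, h1, h2, he⟩ := key (fun n => x (n + v)) (hshift x hx v) x hx w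
    refine ⟨g₁, g₂, h1, h2, ?_⟩
    rw [hcoc x hx v w, he]
    group
  · refine ⟨2 * K, ?_⟩
    intro x hx y hy v
    obtain ⟨g₁, g₂, h1, h2, he⟩ := key x hx y hy v
    obtain ⟨g₁', g₂', h1', h2', he'⟩ := key y hy x hx v
    have b1 : wordLength S₀ (c x v) ≤ wordLength S₀ (c y v) + 2 * K := by
      rw [he]
      have t1 := wordLength_mul_le hS₀sym hS₀gen (g₁ * c y v) g₂
      have t2 := wordLength_mul_le hS₀sym hS₀gen g₁ (c y v)
      omega
    have b2 : wordLength S₀ (c y v) ≤ wordLength S₀ (c x v) + 2 * K := by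
      rw [he']
      have t1 := wordLength_mul_le hS₀sym hS₀gen (g₁' * c x v) g₂'
      have t2 := wordLength_mul_le hS₀sym hS₀gen g₁' (c x v)
      omega
    rw [abs_le]
    constructor <;> omega
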